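/- If a feasible dual solution (α, β) satisfies Σ_i α_i ≥ (1/2)·A and Σ_{w,t} β_{w,t} ≤ A/(2+ε) where A is the algorithm's cost with speed 2+ε, then by weak LP duality A ≤ (2(2+ε)/ε)·OPT, where OPT is the optimal LP value. -/
import Mathlib


/-- If a feasible dual solution has `Σ α ≥ A/2` and `Σ β ≤ A/(2+ε)`,
where `A = ALG(2+ε)` is the algorithm's cost with speed `2+ε`, then since by weak LP
duality the dual objective `Σ α − Σ β` is at most `OPT`, we get
`A ≤ (2(2+ε)/ε)·OPT`. -/
theorem speedup_competitive
    (ε A OPT sumα sumβ : ℝ) (hε : 0 < ε)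
    (hα : A / 2 ≤ sumα)
    (hβ : sumβ ≤ A / (2 + ε))
    (hweak : sumα - sumβ ≤ OPT) :
    A ≤ (2 * (2 + ε) / ε) * OPT := by
  have h2 : (0:ℝ) < 2 + ε := by linarith
  have key : A / 2 - A / (2 + ε) ≤ OPT := by linarith
  rw [div_sub_div _ _ (by norm_num) (ne_of_gt h2)] at key
  have : A * ε ≤ OPT * (2 * (2 + ε)) := by
    have := (div_le_iff₀ (by positivity)).mp key
    nlinarith
  rw [div_mul_eq_mul_div, le_div_iff₀ hε] at *
  nlinarith
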